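/- Σ⁰₂-de Morgan's law for the reals is Weihrauch equivalent to Ramsey's theorem for singletons and two colors: Σ⁰₂-DML_ℝ ≡_W RT¹₂. -/

import Mathlib

open scoped Classical

noncomputable section

/-- Baire space. -/
abbrev Baire : Type := ℕ → ℕ

/-- A partial multifunction with explicit domain. -/
structure MultiFn (α : Type*) where
  Dom : Set α
  val : α → Set α

/-- The length-`k` prefix of `x` as a list. -/
def prefixList (x : Baire) (k : ℕ) : List ℕ := List.ofFn fun i : Fin k => x i

/-- The raw behaviour of the (code of a) partial continuous function `t` on the
finite input `l` at position `n`. -/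
def raw (t : Baire) (l : List ℕ) (n : ℕ) : Option ℕ :=
  match t (Nat.pair (Encodable.encode l) n) with
  | 0 => none
  | Nat.succ v => some v

/-- `evalB t x y` : the partial (continuous) function coded by `t` is defined at `x`
with value `y`; each value `y n` is read off at the minimal prefix of `x` on which
the code converges. Every such function is continuous, and every partial continuous
function on Baire space arises this way. -/
def evalB (t x y : Baire) : Prop :=
  ∀ n, ∃ k, raw t (prefixList x k) n = some (y n) ∧
    ∀ j < k, raw t (prefixList x j) n = none

/-- Pairing on Baire space. -/
def pairB (x y : Baire) : Baire := fun n => Nat.pair (x n) (y n)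

def fstB (z : Baire) : Baire := fun n => (Nat.unpair (z n)).1

def sndB (z : Baire) : Baire := fun n => (Nat.unpair (z n)).2

/-- Weihrauch reduction of `f` to `g` witnessed by an inner reduction (code) `h`
and an outer reduction (code) `k`. -/
def WRedBy (f g : MultiFn Baire) (h k : Baire) : Prop :=
  ∀ x ∈ f.Dom, ∃ hx, evalB h x hx ∧ hx ∈ g.Dom ∧
    ∀ y ∈ g.val hx, ∃ z, evalB k (pairB x y) z ∧ z ∈ f.val x

/-- Weihrauch reducibility (computable reductions). -/
def WRed (f g : MultiFn Baire) : Prop :=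
  ∃ h k : Baire, Computable h ∧ Computable k ∧ WRedBy f g h k

/-- Continuous Weihrauch reducibility. -/
def WRedC (f g : MultiFn Baire) : Prop := ∃ h k : Baire, WRedBy f g h k

/-- Weihrauch equivalence. -/
def WEquiv (f g : MultiFn Baire) : Prop := WRed f g ∧ WRed g f

/-! ## Reduction games -/

/-- Merge a finite list of Baire points into a single Baire point. -/
def mergeList (l : List Baire) : Baire := fun n =>
  if n = 0 then l.length
  else l.getD (Nat.unpair (n - 1)).1 (fun _ => 0) (Nat.unpair (n - 1)).2

/-- Encode a move of Player II (a flag together with a Baire point) as a Baire point;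
the flag `true` means "declare victory", `false` means "query". -/
def encodeMove (m : Bool × Baire) : Baire := fun n =>
  if n = 0 then (if m.1 then 1 else 0) else m.2 (n - 1)

/-- `τ` is a (total continuous) strategy for Player II coded by the Baire point `t`. -/
def StrategyCoded (t : Baire) (τ : List Baire → Bool × Baire) : Prop :=
  ∀ l : List Baire, evalB t (mergeList l) (encodeMove (τ l))

/-- The history of the play where Player I uses `σ` and Player II uses `τ`:
after round `n`, the lists of the moves of I and of II so far. Player I's
first move is `σ []`. -/
def hist (σ : List (Bool × Baire) → Baire) (τ : List Baire → Bool × Baire) :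
    ℕ → List Baire × List (Bool × Baire)
  | 0 => ([σ []], [τ [σ []]])
  | n + 1 =>
    let h := hist σ τ n
    let x := σ h.2
    (h.1 ++ [x], h.2 ++ [τ (h.1 ++ [x])])

/-- Player I's move at round `n`. -/
def xmove (σ : List (Bool × Baire) → Baire) (τ : List Baire → Bool × Baire)
    (n : ℕ) : Baire :=
  (hist σ τ n).1.getD n (fun _ => 0)

/-- Player II's move at round `n`. -/
def ymove (σ : List (Bool × Baire) → Baire) (τ : List Baire → Bool × Baire)
    (n : ℕ) : Bool × Baire :=
  (hist σ τ n).2.getD n (true, fun _ => 0)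

/-- Player I violates the rules of the game `G(f,g)` at round `m`. -/
def IViol (f g : MultiFn Baire) (σ : List (Bool × Baire) → Baire)
    (τ : List Baire → Bool × Baire) (m : ℕ) : Prop :=
  (m = 0 ∧ xmove σ τ 0 ∉ f.Dom) ∨
  (∃ m', m = m' + 1 ∧ (ymove σ τ m').1 = false ∧
    xmove σ τ m ∉ g.val (ymove σ τ m').2)

/-- Player II violates the rules of the game `G(f,g)` at round `m`
(II queried something outside the domain of `g`). -/
def IIViol (g : MultiFn Baire) (σ : List (Bool × Baire) → Baire)
    (τ : List Baire → Bool × Baire) (m : ℕ) : Prop :=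
  (ymove σ τ m).1 = false ∧ (ymove σ τ m).2 ∉ g.Dom

/-- Player II wins the play of `G(f,g)` determined by `σ` and `τ` :
either I violates the rules before II does, or II obeys the rules and
declares victory with an element of `f(x₀)`. -/
def IIWinsPlay (f g : MultiFn Baire) (σ : List (Bool × Baire) → Baire)
    (τ : List Baire → Bool × Baire) : Prop :=
  (∃ m, IViol f g σ τ m ∧ ∀ k < m, ¬ IIViol g σ τ k) ∨
  (∃ m, (∀ k < m, (ymove σ τ k).1 = false) ∧ (ymove σ τ m).1 = true ∧
    (∀ k ≤ m, ¬ IIViol g σ τ k) ∧ (ymove σ τ m).2 ∈ f.val (xmove σ τ 0))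

/-- Generalized Weihrauch reducibility: Player II has a computable winning
strategy in the reduction game `G(f,g)`. -/
def GWRed (f g : MultiFn Baire) : Prop :=
  ∃ (t : Baire) (τ : List Baire → Bool × Baire),
    Computable t ∧ StrategyCoded t τ ∧ ∀ σ, IIWinsPlay f g σ τ

/-- Continuous generalized Weihrauch reducibility: Player II has a continuous
winning strategy in the reduction game `G(f,g)`. -/
def GWRedC (f g : MultiFn Baire) : Prop :=
  ∃ (t : Baire) (τ : List Baire → Bool × Baire),
    StrategyCoded t τ ∧ ∀ σ, IIWinsPlay f g σ τ

/-- The multifunction `g^Game` arising from the reduction game for `g`: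
an input encodes a pair `(x₀, t)` where `t` codes a strategy `τ` for Player II
which declares victory against every play of Player I with first move `x₀`;
outputs are the values with which II declares victory along some such play. -/
def gameOf (g : MultiFn Baire) : MultiFn Baire where
  Dom := {z | ∃ τ, StrategyCoded (sndB z) τ ∧
    ∀ σ, σ [] = fstB z → ∃ m, (ymove σ τ m).1 = true}
  val := fun z => {u | ∃ τ, StrategyCoded (sndB z) τ ∧
    ∃ σ, σ [] = fstB z ∧ ∃ m, (ymove σ τ m).1 = true ∧ (ymove σ τ m).2 = u}

/-! ## Compositional products, parallelizations, coproducts -/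

/-- Composition of partial multifunctions. -/
def mcomp (h g : MultiFn Baire) : MultiFn Baire where
  Dom := {x | x ∈ g.Dom ∧ g.val x ⊆ h.Dom}
  val := fun x => ⋃ y ∈ g.val x, h.val y

/-- `s` is a compositional product `h ⋆ g` : a Weihrauch-minimal element of the
set of compositions `h₀ ∘ g₀` with `g₀ ≤_W g` and `h₀ ≤_W h`. -/
def IsCompProd (h g s : MultiFn Baire) : Prop :=
  (∃ g₀ h₀, WRed g₀ g ∧ WRed h₀ h ∧ WEquiv s (mcomp h₀ g₀)) ∧
  (∀ g₀ h₀, WRed g₀ g → WRed h₀ h → WRed s (mcomp h₀ g₀))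

def tupLen (z : Baire) : ℕ := z 0

def tupProj (z : Baire) (i : ℕ) : Baire := fun m => z (Nat.pair i m + 1)

/-- Finite parallelization `f*`. -/
def finPar (f : MultiFn Baire) : MultiFn Baire where
  Dom := {z | ∀ i < tupLen z, tupProj z i ∈ f.Dom}
  val := fun z => {w | tupLen w = tupLen z ∧
    ∀ i < tupLen z, tupProj w i ∈ f.val (tupProj z i)}

/-- Product of two multifunctions. -/
def prodMF (f g : MultiFn Baire) : MultiFn Baire where
  Dom := {z | fstB z ∈ f.Dom ∧ sndB z ∈ g.Dom}
  val := fun z => {w | fstB w ∈ f.val (fstB z) ∧ sndB w ∈ g.val (sndB z)}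

def tailB (z : Baire) : Baire := fun n => z (n + 1)

/-- Coproduct (disjoint union) of a sequence of multifunctions. -/
def coprod (s : ℕ → MultiFn Baire) : MultiFn Baire where
  Dom := {z | tailB z ∈ (s (z 0)).Dom}
  val := fun z => (s (z 0)).val (tailB z)

/-- The identity multifunction (the Weihrauch degree `1`). -/
def idMF : MultiFn Baire := ⟨Set.univ, fun x => {x}⟩

/-! ## Trees -/

def IsTree (T : Set (List Bool)) : Prop := ∀ σ ∈ T, ∀ τ, τ <+: σ → τ ∈ T

def InfTree (T : Set (List Bool)) : Prop := ∀ ℓ, ∃ σ ∈ T, σ.length = ℓ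

def IsPathOf (T : Set (List Bool)) (p : ℕ → Bool) : Prop :=
  ∀ n, (List.ofFn fun i : Fin n => p i) ∈ T

/-- An all-or-unique tree: at each level, either all strings or exactly one. -/
def AouTree (T : Set (List Bool)) : Prop :=
  IsTree T ∧ ∀ ℓ, ({σ | σ ∈ T ∧ σ.length = ℓ} = {σ : List Bool | σ.length = ℓ} ∨
    ∃ σ₀, {σ | σ ∈ T ∧ σ.length = ℓ} = {σ₀})

/-- A 2-tree: exactly two nodes at each (positive) level. -/
def TwoTree (T : Set (List Bool)) : Prop :=
  IsTree T ∧ ∀ ℓ > 0, ∃ a b : List Bool, a ≠ b ∧ {σ | σ ∈ T ∧ σ.length = ℓ} = {a, b}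

def BranchNodes (T : Set (List Bool)) : Set (List Bool) :=
  {σ | σ ++ [false] ∈ T ∧ σ ++ [true] ∈ T}

/-- A rational 2-tree: a 2-tree with only finitely many branching nodes. -/
def RatTwoTree (T : Set (List Bool)) : Prop := TwoTree T ∧ (BranchNodes T).Finite

/-- A basic clopen tree: the set of strings comparable with a fixed string. -/
def BasicClopenTree (T : Set (List Bool)) : Prop :=
  ∃ σ : List Bool, T = {τ | τ <+: σ ∨ σ <+: τ}

/-- A Baire point codes a tree by its characteristic function. -/
def treeOf (x : Baire) : Set (List Bool) := {σ | x (Encodable.encode σ) = 1}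

/-- A Baire point codes an infinite binary sequence. -/
def pathOf (y : Baire) : ℕ → Bool := fun n => y n != 0

/-- Weak König's lemma restricted to the class `C` of trees, as a multifunction. -/
def WKLof (C : Set (List Bool) → Prop) : MultiFn Baire where
  Dom := {x | C (treeOf x) ∧ InfTree (treeOf x)}
  val := fun x => {y | IsPathOf (treeOf x) (pathOf y)}

def WKL : MultiFn Baire := WKLof IsTree
def WKLle2 : MultiFn Baire := WKLof TwoTree
def WKLeq2 : MultiFn Baire := WKLof RatTwoTree
def WKLaou : MultiFn Baire := WKLof AouTree
def WKLclop : MultiFn Baire := WKLof BasicClopenTree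

/-! ## Arithmetical principles as multifunctions -/

/-- The discrete limit operator on ℕ. -/
def LimN : MultiFn Baire where
  Dom := {x | ∃ v N, ∀ n ≥ N, x n = v}
  val := fun x => {u | ∃ v, (∀ m, u m = v) ∧ ∃ N, ∀ n ≥ N, x n = v}

/-- `Σ⁰₂` double negation elimination, as a multifunction: the input codes a
decidable relation `R(n,m) ≡ α(⟨n,m⟩) = 0` with `¬¬∃n∀m R(n,m)`; outputs code
some `n` with `∀m R(n,m)`. -/
def DNE2 : MultiFn Baire where
  Dom := {α | ¬¬ ∃ n, ∀ m, α (Nat.pair n m) = 0}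
  val := fun α => {u | ∃ n, (∀ m, u m = n) ∧ ∀ m, α (Nat.pair n m) = 0}

/-- Ramsey's theorem for singletons and two colours. -/
def RT12 : MultiFn Baire where
  Dom := {c | ∀ n, c n ≤ 1}
  val := fun c => {h | (∀ n, h n ≤ 1) ∧ {n | h n = 1}.Infinite ∧
    ∃ i, ∀ n, h n = 1 → c n = i}

/-- The `i`-th `Σ⁰₂` statement coded by `α`. -/
def Sig2 (α : Baire) (i : ℕ) : Prop := ∃ a, ∀ b, α (Nat.pair i (Nat.pair a b)) = 0

/-- `Σ⁰₂` de Morgan's law, as a multifunction. -/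
def DML2 : MultiFn Baire where
  Dom := {α | ¬ (Sig2 α 0 ∧ Sig2 α 1)}
  val := fun α => {u | ∃ j ≤ 1, (∀ m, u m = j) ∧ ¬ Sig2 α j}

/-- The limited principle of omniscience. -/
def LPO : MultiFn Baire where
  Dom := Set.univ
  val := fun p => {u | ((∀ n, u n = 0) ∧ ∀ n, p n = 0) ∨
    ((∀ n, u n = 1) ∧ ∃ n, p n ≠ 0)}

/-- A semicontinuous bound for a (finite-valued) multifunction `f`: a partial
continuous `g` (coded by `t`) and a lower semicontinuous `b` such that
`f(x) ⊆ {g(x,n) : n < b(x)}`. -/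
def SemicontBound (f : MultiFn Baire) : Prop :=
  ∃ (t : Baire) (b : Baire → ℕ), LowerSemicontinuousOn b f.Dom ∧
    ∀ x ∈ f.Dom, f.val x ⊆ {y | ∃ n < b x, evalB t (pairB x (fun _ => n)) y}

/-! ## Relative partial combinatory algebras and jump operators -/

def app2 {α : Type*} (m : α → α → Option α) (a b c : α) : Option α :=
  (m a b).bind fun ab => m ab c

/-- `(P, α, m)` is a relative partial combinatory algebra: there are combinators
`k, s ∈ P` (shared by the lightface part `P` and the boldface part `α`), `P` is
closed under the application, and `k`, `s` satisfy the usual specifications. -/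
def IsRelPCA {α : Type*} (m : α → α → Option α) (P : Set α) : Prop :=
  ∃ k ∈ P, ∃ s ∈ P,
    (∀ a ∈ P, ∀ b ∈ P, ∀ c, m a b = some c → c ∈ P) ∧
    (∀ a b : α, app2 m k a b = some a) ∧
    (∀ a b : α, ∃ c, app2 m s a b = some c) ∧
    (∀ a b c : α, (app2 m s a b).bind (fun x => m x c) =
      (m a c).bind fun ac => (m b c).bind fun bc => m ac bc)

/-- Composition of set-valued maps (empty value = undefined). -/
def mcompSet {α : Type*} (j₁ j₂ : α → Set α) (x : α) : Set α :=
  {z | (∀ y ∈ j₂ x, (j₁ y).Nonempty) ∧ ∃ y ∈ j₂ x, z ∈ j₁ y}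

/-- `j` is an idempotent jump operator on the relative pca `(P, α, m)`. -/
def IdempotentJump {α : Type*} (m : α → α → Option α) (P : Set α)
    (j : α → Set α) : Prop :=
  (∃ u ∈ P, ∀ a x : α, ∃ w, app2 m u a x = some w ∧
    j w = {z | ∃ y ∈ j x, m a y = some z}) ∧
  (∃ ι ∈ P, ∀ x : α, ∃ w, m ι x = some w ∧ j w = {x}) ∧
  (∃ jj ∈ P, ∀ x : α, ∃ w, m jj x = some w ∧ j w = mcompSet j j x)

/-- `P_j = {a' : a ∈ P, j(a) = {a'}}`. -/
def Pjump {α : Type*} (P : Set α) (j : α → Set α) : Set α :=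
  {a' | ∃ a ∈ P, j a = {a'}}

/-- The new application `a ∗_j b = a' ∗ b` where `j(a) = {a'}`. -/
def appJ {α : Type*} (m : α → α → Option α) (j : α → Set α) (a b : α) : Option α :=
  if h : ∃ a', j a = {a'} then m h.choose b else none

/-- `f` is `(Q, j)`-realizable: some `a ∈ Q` satisfies `j(a x) ⊆ f(x)` for all
`x ∈ dom f`. -/
def JRealizable {α : Type*} (m : α → α → Option α) (Q : Set α) (j : α → Set α)
    (f : MultiFn α) : Prop :=
  ∃ a ∈ Q, ∀ x ∈ f.Dom, ∃ w, m a x = some w ∧ (j w).Nonempty ∧ j w ⊆ f.val x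

/-- The Kleene second algebra application. -/
def k2app (p x : Baire) : Option Baire :=
  if h : ∃ y, evalB p x y then some h.choose else none

/-- The lightface part of the Kleene–Vesley algebra: the computable points. -/
def KVP : Set Baire := {p | Computable p}

/-! ## Real-number principles -/

/-- A regular Cauchy sequence of rationals: `|q n - q m| < 2⁻ⁿ` for `m ≥ n`. -/
def RegCauchy (q : ℕ → ℚ) : Prop := ∀ n m, n ≤ m → |q n - q m| < ((2 : ℚ) ^ n)⁻¹

/-- `x` is the limit of the rational sequence `q`. -/
def limOf (q : ℕ → ℚ) (x : ℝ) : Prop :=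
  Filter.Tendsto (fun n => (q n : ℝ)) Filter.atTop (nhds x)

/-- The real with binary expansion `f`. -/
def binExp (f : ℕ → Bool) : ℝ := ∑' n, if f n then ((2 : ℝ)⁻¹) ^ (n + 1) else 0

/-- `x` is not irrational (stated negatively, as in `BE_ℚ`). -/
def NotIrrational (x : ℝ) : Prop := ¬ ∀ a b : ℤ, a ≠ 0 → (a : ℝ) * x ≠ (b : ℝ)

/-- The binary expansion principle for regular Cauchy rationals. -/
def BEQProp : Prop :=
  ∀ (q : ℕ → ℚ) (x : ℝ), RegCauchy q → limOf q x → x ∈ Set.Icc (0 : ℝ) 1 →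
    NotIrrational x → ∃ f : ℕ → Bool, x = binExp f

/-- Decode a Baire point as a sequence of rationals. -/
def qOf (z : Baire) (n : ℕ) : ℚ := ((Encodable.decode (z n) : Option ℚ)).getD 0

/-- `BE_ℚ` as a multifunction. -/
def BEQmf : MultiFn Baire where
  Dom := {z | RegCauchy (qOf z) ∧
    ∃ x, limOf (qOf z) x ∧ x ∈ Set.Icc (0 : ℝ) 1 ∧ NotIrrational x}
  val := fun z => {y | ∀ x, limOf (qOf z) x → x = binExp (pathOf y)}

/-- `f` is the rational piecewise linear map through the points listed in `l`. -/
def Interp (l : List (ℚ × ℚ)) (f : ℝ → ℝ) : Prop :=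
  (l.map Prod.fst).Pairwise (· < ·) ∧
  (∀ p ∈ l, f (p.1 : ℝ) = (p.2 : ℝ)) ∧
  ∀ i, i + 1 < l.length → ∀ t ∈ Set.Icc (0 : ℝ) 1,
    f ((1 - t) * ((l.getD i (0, 0)).1 : ℝ) + t * ((l.getD (i + 1) (0, 0)).1 : ℝ)) =
      (1 - t) * ((l.getD i (0, 0)).2 : ℝ) + t * ((l.getD (i + 1) (0, 0)).2 : ℝ)

/-- Every point of `l` lies in the `2^{-s-1}`-neighbourhood of the graph of `f`. -/
def ApproxStep (l : List (ℚ × ℚ)) (f : ℝ → ℝ) (s : ℕ) : Prop :=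
  ∀ p ∈ l, ∃ x : ℝ, |(p.1 : ℝ) - x| < (2 : ℝ)⁻¹ ^ (s + 1) ∧
    |(p.2 : ℝ) - f x| < (2 : ℝ)⁻¹ ^ (s + 1)

/-- The intermediate value theorem for rational piecewise linear maps given as
discrete limits. -/
def IVTlinProp : Prop :=
  ∀ (c : ℕ → List (ℚ × ℚ)) (f : ℕ → ℝ → ℝ),
    (∀ s, Interp (c s) (f s)) →
    (∀ s, ApproxStep (c (s + 1)) (f s) s) →
    (¬ ∀ s, ∃ t > s, c t ≠ c s) →
    ∀ s₀, (∀ s ≥ s₀, c s = c s₀) →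
      f s₀ 0 < 0 → 0 < f s₀ 1 → ∃ x ∈ Set.Icc (0 : ℝ) 1, f s₀ x = 0

/-- Decode a Baire point as a sequence of finite lists of rational points. -/
def cOf (z : Baire) (n : ℕ) : List (ℚ × ℚ) :=
  ((Encodable.decode (z n) : Option (List (ℚ × ℚ)))).getD []

/-- `IVT_lin` as a multifunction: the input codes a discrete-limit approximation
of a rational piecewise linear map with a sign change, and outputs are regular
Cauchy names of zeros. -/
def IVTlinMF : MultiFn Baire where
  Dom := {z | (∀ s, ∃ fs : ℝ → ℝ, Interp (cOf z s) fs) ∧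
    (∀ s, ∀ fs : ℝ → ℝ, Interp (cOf z s) fs → ApproxStep (cOf z (s + 1)) fs s) ∧
    (¬ ∀ s, ∃ t > s, cOf z t ≠ cOf z s) ∧
    (∀ s₀, (∀ s ≥ s₀, cOf z s = cOf z s₀) → ∀ g : ℝ → ℝ, Interp (cOf z s₀) g →
      g 0 < 0 ∧ 0 < g 1)}
  val := fun z => {y | RegCauchy (qOf y) ∧
    ∀ s₀, (∀ s ≥ s₀, cOf z s = cOf z s₀) → ∀ g : ℝ → ℝ, Interp (cOf z s₀) g →
      ∃ x, limOf (qOf y) x ∧ x ∈ Set.Icc (0 : ℝ) 1 ∧ g x = 0}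


/-! ### Auxiliary machinery for the proof -/

section Aux

/-- Build a code from a convergence predicate `D` and a value function `G`. -/
def codeOf (D : List ℕ → ℕ → Bool) (G : List ℕ → ℕ → ℕ) : Baire := fun m =>
  (Option.map (fun l => bif D l (Nat.unpair m).2 then G l (Nat.unpair m).2 + 1 else 0)
    (Encodable.decode (Nat.unpair m).1 : Option (List ℕ))).getD 0

lemma raw_codeOf (D : List ℕ → ℕ → Bool) (G : List ℕ → ℕ → ℕ) (l : List ℕ) (n : ℕ) :
    raw (codeOf D G) l n = bif D l n then some (G l n) else none := by
  unfold raw codeOf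
  rw [Nat.unpair_pair]
  simp only [Encodable.encodek, Option.map_some]
  cases D l n <;> rfl

lemma evalB_codeOf {D : List ℕ → ℕ → Bool} {G : List ℕ → ℕ → ℕ} {x y : Baire}
    (h : ∀ n, ∃ k, D (prefixList x k) n = true ∧ (∀ j < k, D (prefixList x j) n = false) ∧
      G (prefixList x k) n = y n) :
    evalB (codeOf D G) x y := by
  intro n
  obtain ⟨k, h1, h2, h3⟩ := h n
  refine ⟨k, ?_, fun j hj => ?_⟩
  · rw [raw_codeOf, h1, h3]; rfl
  · rw [raw_codeOf, h2 j hj]; rfl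

lemma codeOf_computable {D : List ℕ → ℕ → Bool} {G : List ℕ → ℕ → ℕ}
    (hD : Primrec₂ D) (hG : Primrec₂ G) : Computable (codeOf D G) := by
  have ho : Primrec fun m : ℕ => (Encodable.decode (Nat.unpair m).1 : Option (List ℕ)) :=
    Primrec.decode.comp (Primrec.fst.comp Primrec.unpair)
  have hn : Primrec fun m : ℕ => (Nat.unpair m).2 :=
    Primrec.snd.comp Primrec.unpair
  have hf : Primrec₂ fun (m : ℕ) (l : List ℕ) =>
      bif D l (Nat.unpair m).2 then G l (Nat.unpair m).2 + 1 else 0 :=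
    Primrec.cond (hD.comp Primrec.snd (hn.comp Primrec.fst))
      (Primrec.succ.comp (hG.comp Primrec.snd (hn.comp Primrec.fst)))
      (Primrec.const 0)
  exact Primrec.to_comp
    (Primrec.option_getD.comp (Primrec.option_map ho hf) (Primrec.const 0))

/-- Least element `< N` satisfying `P`, else the default `d`. -/
def lMin (P : ℕ → Bool) (N d : ℕ) : ℕ :=
  (List.range N).foldr (fun a acc => bif P a then a else acc) d

lemma lMin_succ (P : ℕ → Bool) (N d : ℕ) :
    lMin P (N + 1) d = lMin P N (bif P N then N else d) := by
  unfold lMin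
  rw [List.range_succ, List.foldr_append]
  rfl

lemma lMin_spec (P : ℕ → Bool) (N : ℕ) : ∀ d,
    (lMin P N d = d ∧ ∀ a < N, P a = false) ∨
    (lMin P N d < N ∧ P (lMin P N d) = true ∧ ∀ b < lMin P N d, P b = false) := by
  induction N with
  | zero => intro d; left; exact ⟨rfl, by omega⟩
  | succ N ih =>
    intro d
    rw [lMin_succ]
    rcases ih (bif P N then N else d) with ⟨h1, h2⟩ | ⟨h1, h2, h3⟩
    · cases hPN : P N with
      | true =>
        right
        rw [hPN] at h1
        simp only [cond_true] at h1 ⊢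
        rw [h1]
        exact ⟨by omega, hPN, h2⟩
      | false =>
        left
        rw [hPN] at h1
        simp only [cond_false] at h1 ⊢
        rw [h1]
        refine ⟨rfl, fun a ha => ?_⟩
        rcases Nat.lt_succ_iff_lt_or_eq.1 ha with h | h
        · exact h2 a h
        · rw [h]; exact hPN
    · right; exact ⟨by omega, h2, h3⟩

lemma lMin_eq_of {P : ℕ → Bool} {N d a : ℕ} (ha : a < N) (hP : P a = true)
    (hmin : ∀ b < a, P b = false) : lMin P N d = a := by
  rcases lMin_spec P N d with ⟨_, h2⟩ | ⟨h1, h2, h3⟩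
  · rw [h2 a ha] at hP; cases hP
  · rcases lt_trichotomy (lMin P N d) a with h | h | h
    · rw [hmin _ h] at h2; cases h2
    · exact h
    · rw [h3 a h] at hP; cases hP

lemma lMin_default {P : ℕ → Bool} {N d : ℕ} (h : ∀ a < N, P a = false) :
    lMin P N d = d := by
  rcases lMin_spec P N d with ⟨h1, _⟩ | ⟨h1, h2, _⟩
  · exact h1
  · rw [h _ h1] at h2; cases h2

lemma lMin_le_of {P : ℕ → Bool} {N d a : ℕ} (ha : a < N) (hP : P a = true) :
    lMin P N d ≤ a := by
  rcases lMin_spec P N d with ⟨_, h2⟩ | ⟨h1, h2, h3⟩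
  · rw [h2 a ha] at hP; cases hP
  · by_contra hc
    rw [h3 a (by omega)] at hP; cases hP

lemma lMin_le_max {P : ℕ → Bool} {N d : ℕ} : lMin P N d ≤ max N d := by
  rcases lMin_spec P N d with ⟨h1, _⟩ | ⟨h1, _, _⟩
  · rw [h1]; exact le_max_right _ _
  · exact le_trans h1.le (le_max_left _ _)

lemma lMin_gt {P : ℕ → Bool} {N d A : ℕ} (h : ∀ a ≤ A, P a = false) (hd : A < d) :
    A < lMin P N d := by
  rcases lMin_spec P N d with ⟨h1, _⟩ | ⟨_, h2, _⟩
  · omega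
  · by_contra hc
    rw [h (lMin P N d) (by omega)] at h2; cases h2

lemma lMin_congr {P Q : ℕ → Bool} (N : ℕ) (h : ∀ a < N, P a = Q a) : ∀ d,
    lMin P N d = lMin Q N d := by
  induction N with
  | zero => intro d; rfl
  | succ N ih =>
    intro d
    rw [lMin_succ, lMin_succ, h N (by omega), ih (fun a ha => h a (by omega))]

/-- Bounded check that `g (⟨i, a, b⟩) = 0` for all `b ≤ s`. -/
def allZ (g : ℕ → ℕ) (i a s : ℕ) : Bool :=
  decide ((List.range (s + 1)).foldr (fun b acc => g (Nat.pair i (Nat.pair a b)) + acc) 0 = 0)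

lemma foldr_add_eq_zero (f : ℕ → ℕ) (l : List ℕ) :
    l.foldr (fun b acc => f b + acc) 0 = 0 ↔ ∀ b ∈ l, f b = 0 := by
  induction l with
  | nil => simp
  | cons hd tl ih => simp [Nat.add_eq_zero, ih]

lemma foldr_add_congr (f g : ℕ → ℕ) (l : List ℕ) (h : ∀ b ∈ l, f b = g b) :
    l.foldr (fun b acc => f b + acc) 0 = l.foldr (fun b acc => g b + acc) 0 := by
  induction l with
  | nil => rfl
  | cons hd tl ih => simp_all

lemma allZ_iff {g : ℕ → ℕ} {i a s : ℕ} :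
    allZ g i a s = true ↔ ∀ b ≤ s, g (Nat.pair i (Nat.pair a b)) = 0 := by
  simp [allZ, foldr_add_eq_zero, Nat.lt_succ_iff]

/-- The marker for the `i`-th `Σ⁰₂` statement at stage `s`. -/
def marker (g : ℕ → ℕ) (i s : ℕ) : ℕ := lMin (fun a => allZ g i a s) (s + 1) (s + 1)

/-- The coloring: colour `s` with the index whose marker currently looks larger. -/
def cColor (g : ℕ → ℕ) (s : ℕ) : ℕ :=
  bif decide (marker g 0 s ≤ marker g 1 s) then 1 else 0

lemma cColor_le_one (g : ℕ → ℕ) (s : ℕ) : cColor g s ≤ 1 := by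
  unfold cColor; cases decide (marker g 0 s ≤ marker g 1 s) <;> simp

lemma pair_le_pair {a b c d : ℕ} (h1 : a ≤ c) (h2 : b ≤ d) :
    Nat.pair a b ≤ Nat.pair c d := by
  have step1 : Nat.pair a b ≤ Nat.pair c b := by
    rcases eq_or_lt_of_le h1 with h | h
    · rw [h]
    · exact (Nat.pair_lt_pair_left b h).le
  have step2 : Nat.pair c b ≤ Nat.pair c d := by
    rcases eq_or_lt_of_le h2 with h | h
    · rw [h]
    · exact (Nat.pair_lt_pair_right c h).le
  exact le_trans step1 step2

lemma marker_congr {g₁ g₂ : ℕ → ℕ} {i s : ℕ}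
    (h : ∀ a b, a ≤ s → b ≤ s → g₁ (Nat.pair i (Nat.pair a b)) = g₂ (Nat.pair i (Nat.pair a b))) :
    marker g₁ i s = marker g₂ i s := by
  unfold marker
  apply lMin_congr
  intro a ha
  unfold allZ
  have hf : (List.range (s + 1)).foldr
        (fun b acc => g₁ (Nat.pair i (Nat.pair a b)) + acc) 0 =
      (List.range (s + 1)).foldr
        (fun b acc => g₂ (Nat.pair i (Nat.pair a b)) + acc) 0 := by
    apply foldr_add_congr
    intro b hb
    rw [List.mem_range] at hb
    exact h a b (by omega) (by omega)
  rw [hf]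

lemma cColor_congr {g₁ g₂ : ℕ → ℕ} {s : ℕ}
    (h : ∀ j ≤ Nat.pair 1 (Nat.pair s s), g₁ j = g₂ j) :
    cColor g₁ s = cColor g₂ s := by
  have hm : ∀ i ≤ 1, marker g₁ i s = marker g₂ i s := by
    intro i hi
    apply marker_congr
    intro a b ha hb
    exact h _ (pair_le_pair hi (pair_le_pair ha hb))
  unfold cColor
  rw [hm 0 (by omega), hm 1 (by omega)]

lemma marker_le {g : ℕ → ℕ} {i a : ℕ} (ha : ∀ b, g (Nat.pair i (Nat.pair a b)) = 0)
    (s : ℕ) : marker g i s ≤ a := by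
  rcases le_or_gt (s + 1) a with h | h
  · have h2 := lMin_le_max (P := fun a => allZ g i a s) (N := s + 1) (d := s + 1)
    rw [max_self] at h2
    unfold marker
    omega
  · exact lMin_le_of h (allZ_iff.2 fun b _ => ha b)

lemma marker_tendsto {g : ℕ → ℕ} {i : ℕ}
    (h : ∀ a, ∃ b, g (Nat.pair i (Nat.pair a b)) ≠ 0) (A : ℕ) :
    ∃ s₀, ∀ s ≥ s₀, A < marker g i s := by
  choose bw hbw using h
  refine ⟨A + (Finset.range (A + 1)).sum bw, fun s hs => ?_⟩
  apply lMin_gt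
  · intro a haA
    rw [← Bool.not_eq_true, allZ_iff]
    push_neg
    refine ⟨bw a, ?_, hbw a⟩
    calc bw a ≤ (Finset.range (A + 1)).sum bw :=
          Finset.single_le_sum (fun _ _ => Nat.zero_le _) (Finset.mem_range.2 (by omega))
      _ ≤ s := by omega
  · omega

lemma sig2_iff (α : Baire) (i : ℕ) :
    Sig2 α i ↔ ∃ a, ∀ b, α (Nat.pair i (Nat.pair a b)) = 0 := Iff.rfl

/-- The key combinatorial lemma: if `cColor x` takes the value `i ≤ 1` infinitely
often, then the `i`-th `Σ⁰₂` statement fails. -/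
lemma not_sig2_of_infinite {x : Baire} (hdom : ¬(Sig2 x 0 ∧ Sig2 x 1)) {i : ℕ}
    (hi : i ≤ 1) (hinf : {s | cColor x s = i}.Infinite) : ¬ Sig2 x i := by
  intro hs
  have hcase : i = 0 ∨ i = 1 := by omega
  have hother : ¬ Sig2 x (1 - i) := by
    intro h2
    rcases hcase with h | h <;> subst h
    · exact hdom ⟨hs, h2⟩
    · exact hdom ⟨h2, hs⟩
  obtain ⟨a, ha⟩ := hs
  have hb : ∀ s, marker x i s ≤ a := marker_le ha
  have hne : ∀ a', ∃ b, x (Nat.pair (1 - i) (Nat.pair a' b)) ≠ 0 := by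
    intro a'
    by_contra hc
    push_neg at hc
    exact hother ⟨a', hc⟩
  obtain ⟨s₀, hs₀⟩ := marker_tendsto hne a
  have key : ∀ s, s₀ ≤ s → cColor x s ≠ i := by
    intro s hsge
    have h1 : a < marker x (1 - i) s := hs₀ s hsge
    rcases hcase with h | h <;> subst h
    · have hle : marker x 0 s ≤ marker x 1 s := le_trans (hb s) (by simpa using h1.le)
      simp [cColor, hle]
    · have hle : ¬ marker x 0 s ≤ marker x 1 s := by
        have h2 := hb s
        simp only [Nat.sub_self] at h1
        omega
      simp [cColor, hle]
  have hsub : {s | cColor x s = i} ⊆ Set.Iio s₀ := by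
    intro s hsmem
    by_contra hc
    exact key s (by simpa [Set.mem_Iio] using hc) hsmem
  exact hinf (Set.Finite.subset (Set.finite_Iio s₀) hsub)

lemma prefixList_length (x : Baire) (k : ℕ) : (prefixList x k).length = k := by
  simp [prefixList]

lemma prefixList_getD {x : Baire} {j k : ℕ} (h : j < k) :
    (prefixList x k).getD j 0 = x j := by
  rw [List.getD_eq_getElem _ _ (by simpa [prefixList_length] using h)]
  simp [prefixList]

/-! #### Primrec lemmas -/

lemma lMin_primrec {α : Type*} [Primcodable α] {p : α → ℕ → Bool} {N d : α → ℕ}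
    (hp : Primrec₂ p) (hN : Primrec N) (hd : Primrec d) :
    Primrec fun a => lMin (p a) (N a) (d a) := by
  have hh : Primrec₂ fun (a : α) (q : ℕ × ℕ) => bif p a q.1 then q.1 else q.2 :=
    Primrec.cond (hp.comp Primrec.fst (Primrec.fst.comp Primrec.snd))
      (Primrec.fst.comp Primrec.snd) (Primrec.snd.comp Primrec.snd)
  exact Primrec.list_foldr (Primrec.list_range.comp hN) hd hh

lemma allZ_getD_primrec {α : Type*} [Primcodable α] (i : ℕ) {l : α → List ℕ}
    {a s : α → ℕ} (hl : Primrec l) (ha : Primrec a) (hs : Primrec s) :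
    Primrec fun q => allZ (fun j => (l q).getD j 0) i (a q) (s q) := by
  have hsum : Primrec fun q =>
      (List.range (s q + 1)).foldr
        (fun b acc => (l q).getD (Nat.pair i (Nat.pair (a q) b)) 0 + acc) 0 := by
    have hh : Primrec₂ fun (q : α) (r : ℕ × ℕ) =>
        (l q).getD (Nat.pair i (Nat.pair (a q) r.1)) 0 + r.2 := by
      have hidx : Primrec fun x : α × (ℕ × ℕ) =>
          Nat.pair i (Nat.pair (a x.1) x.2.1) :=
        Primrec₂.natPair.comp (Primrec.const i)
          (Primrec₂.natPair.comp (ha.comp Primrec.fst) (Primrec.fst.comp Primrec.snd))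
      exact Primrec.nat_add.comp
        ((Primrec.list_getD 0).comp (hl.comp Primrec.fst) hidx)
        (Primrec.snd.comp Primrec.snd)
    exact Primrec.list_foldr (Primrec.list_range.comp (Primrec.succ.comp hs))
      (Primrec.const 0) hh
  exact (Primrec.eq.comp hsum (Primrec.const 0)).decide

lemma marker_getD_primrec {α : Type*} [Primcodable α] (i : ℕ) {l : α → List ℕ}
    {s : α → ℕ} (hl : Primrec l) (hs : Primrec s) :
    Primrec fun q => marker (fun j => (l q).getD j 0) i (s q) := by
  unfold marker
  exact lMin_primrec
    (Primrec₂.mk (allZ_getD_primrec i (hl.comp Primrec.fst) Primrec.snd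
      (hs.comp Primrec.fst)))
    (Primrec.succ.comp hs) (Primrec.succ.comp hs)

lemma cColor_getD_primrec {α : Type*} [Primcodable α] {l : α → List ℕ}
    {s : α → ℕ} (hl : Primrec l) (hs : Primrec s) :
    Primrec fun q => cColor (fun j => (l q).getD j 0) (s q) := by
  unfold cColor
  exact Primrec.cond
    (Primrec.nat_le.comp (marker_getD_primrec 0 hl hs) (marker_getD_primrec 1 hl hs)).decide
    (Primrec.const 1) (Primrec.const 0)

/-! #### The four codes -/

/-- Inner code for `DML2 ≤ RT12`. -/
def D1 : List ℕ → ℕ → Bool := fun l n =>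
  decide (l.length = Nat.pair 1 (Nat.pair n n) + 1)

def G1 : List ℕ → ℕ → ℕ := fun l n => cColor (fun j => l.getD j 0) n

lemma D1_primrec : Primrec₂ D1 :=
  (Primrec.eq.comp₂ (Primrec.list_length.comp₂ Primrec₂.left)
    (Primrec.succ.comp₂ (Primrec₂.natPair.comp₂ (Primrec₂.const 1)
      (Primrec₂.natPair.comp₂ Primrec₂.right Primrec₂.right)))).decide

lemma G1_primrec : Primrec₂ G1 :=
  Primrec₂.mk (cColor_getD_primrec Primrec.fst Primrec.snd)

/-- Outer code for `DML2 ≤ RT12`: search for the first element of the solution. -/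
def nFst (l : List ℕ) : ℕ :=
  lMin (fun a => decide ((Nat.unpair (l.getD a 0)).2 = 1)) l.length l.length

def BB (t : ℕ) : ℕ := Nat.pair 1 (Nat.pair t t) + t + 2

def D2 : List ℕ → ℕ → Bool := fun l _ =>
  decide (nFst l < l.length) && decide (l.length = BB (nFst l))

def G2 : List ℕ → ℕ → ℕ := fun l _ =>
  cColor (fun j => (Nat.unpair (l.getD j 0)).1) (nFst l)

lemma nFst_primrec : Primrec nFst := by
  unfold nFst
  exact lMin_primrec
    (Primrec₂.mk (Primrec.eq.comp
      (Primrec.snd.comp (Primrec.unpair.comp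
        ((Primrec.list_getD 0).comp Primrec.fst Primrec.snd)))
      (Primrec.const 1)).decide)
    Primrec.list_length Primrec.list_length

lemma BB_primrec : Primrec BB := by
  unfold BB
  exact Primrec.succ.comp (Primrec.succ.comp (Primrec.nat_add.comp
    (Primrec₂.natPair.comp (Primrec.const 1)
      (Primrec₂.natPair.comp Primrec.id Primrec.id)) Primrec.id))

lemma D2_primrec : Primrec₂ D2 := by
  apply Primrec₂.mk
  have h1 : Primrec fun p : List ℕ × ℕ => decide (nFst p.1 < p.1.length) :=
    (Primrec.nat_lt.comp (nFst_primrec.comp Primrec.fst)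
      (Primrec.list_length.comp Primrec.fst)).decide
  have h2 : Primrec fun p : List ℕ × ℕ => decide (p.1.length = BB (nFst p.1)) :=
    (Primrec.eq.comp (Primrec.list_length.comp Primrec.fst)
      (BB_primrec.comp (nFst_primrec.comp Primrec.fst))).decide
  exact Primrec.and.comp h1 h2

lemma G2_primrec : Primrec₂ G2 := by
  unfold G2
  have h : Primrec fun l : List ℕ =>
      cColor (fun j => (List.map (fun v => (Nat.unpair v).1) l).getD j 0) (nFst l) :=
    cColor_getD_primrec
      (Primrec.list_map Primrec.id
        (Primrec₂.mk (Primrec.fst.comp (Primrec.unpair.comp Primrec.snd))))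
      nFst_primrec
  have heq : ∀ l : List ℕ,
      cColor (fun j => (List.map (fun v => (Nat.unpair v).1) l).getD j 0) (nFst l) =
      cColor (fun j => (Nat.unpair (l.getD j 0)).1) (nFst l) := by
    intro l
    apply cColor_congr
    intro j _
    rcases lt_or_ge j l.length with hj | hj
    · rw [List.getD_eq_getElem _ _ (by simpa using hj), List.getD_eq_getElem _ _ hj]
      simp
    · rw [List.getD_eq_default _ _ (by simpa using hj), List.getD_eq_default _ _ hj]
      simp
  exact Primrec₂.mk ((Primrec.of_eq (h.comp Primrec.fst)) fun q => heq q.1)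

/-- Inner code for `RT12 ≤ DML2`. -/
def D3 : List ℕ → ℕ → Bool := fun l m => decide (l.length = m + 1)

def G3 : List ℕ → ℕ → ℕ := fun l m =>
  bif decide ((Nat.unpair (Nat.unpair m).2).1 ≤ (Nat.unpair (Nat.unpair m).2).2) &&
      decide (l.getD (Nat.unpair (Nat.unpair m).2).2 0 = (Nat.unpair m).1)
  then 1 else 0

lemma D3_primrec : Primrec₂ D3 :=
  (Primrec.eq.comp₂ (Primrec.list_length.comp₂ Primrec₂.left)
    (Primrec.succ.comp₂ Primrec₂.right)).decide

lemma G3_primrec : Primrec₂ G3 := by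
  unfold G3
  apply Primrec₂.mk
  have hm2 : Primrec fun q : List ℕ × ℕ => (Nat.unpair q.2).2 :=
    Primrec.snd.comp (Primrec.unpair.comp Primrec.snd)
  have ha : Primrec fun q : List ℕ × ℕ => (Nat.unpair (Nat.unpair q.2).2).1 :=
    Primrec.fst.comp (Primrec.unpair.comp hm2)
  have hb : Primrec fun q : List ℕ × ℕ => (Nat.unpair (Nat.unpair q.2).2).2 :=
    Primrec.snd.comp (Primrec.unpair.comp hm2)
  exact Primrec.cond
    (Primrec.and.comp (Primrec.nat_le.comp ha hb).decide
      (Primrec.eq.comp ((Primrec.list_getD 0).comp Primrec.fst hb)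
        (Primrec.fst.comp (Primrec.unpair.comp Primrec.snd))).decide)
    (Primrec.const 1) (Primrec.const 0)

/-- Outer code for `RT12 ≤ DML2`. -/
def D4 : List ℕ → ℕ → Bool := fun l n => decide (l.length = n + 1)

def G4 : List ℕ → ℕ → ℕ := fun l n =>
  bif decide ((Nat.unpair (l.getD n 0)).1 = (Nat.unpair (l.getD 0 0)).2) then 1 else 0

lemma D4_primrec : Primrec₂ D4 := D3_primrec

lemma G4_primrec : Primrec₂ G4 := by
  unfold G4
  apply Primrec₂.mk
  exact Primrec.cond
    (Primrec.eq.comp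
      (Primrec.fst.comp (Primrec.unpair.comp
        ((Primrec.list_getD 0).comp Primrec.fst Primrec.snd)))
      (Primrec.snd.comp (Primrec.unpair.comp
        ((Primrec.list_getD 0).comp Primrec.fst (Primrec.const 0))))).decide
    (Primrec.const 1) (Primrec.const 0)

end Aux

/-- `Σ⁰₂-DML_ℝ ≡_W RT¹₂`. -/
theorem dml2_equiv_rt12 : WEquiv DML2 RT12 := by
  constructor
  · -- DML2 ≤_W RT12
    refine ⟨codeOf D1 G1, codeOf D2 G2,
      codeOf_computable D1_primrec G1_primrec,
      codeOf_computable D2_primrec G2_primrec, ?_⟩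
    intro x hx
    -- the coloring
    refine ⟨fun n => cColor x n, ?_, ?_, ?_⟩
    · -- evalB of the inner code
      apply evalB_codeOf
      intro n
      refine ⟨Nat.pair 1 (Nat.pair n n) + 1, ?_, ?_, ?_⟩
      · simp [D1, prefixList_length]
      · intro j hj
        simp only [D1, prefixList_length]
        simpa using Nat.ne_of_lt hj
      · unfold G1
        apply cColor_congr
        intro j hj
        exact prefixList_getD (by omega)
    · -- in the domain of RT12
      intro n
      exact cColor_le_one x n
    · -- outer reduction
      intro y hy
      obtain ⟨hy1, hy2, i, hy3⟩ := hy
      have hex : ∃ n, y n = 1 := by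
        obtain ⟨n, hn⟩ := hy2.nonempty
        exact ⟨n, hn⟩
      set n₀ := Nat.find hex with hn₀
      have hyn₀ : y n₀ = 1 := Nat.find_spec hex
      have hymin : ∀ b < n₀, y b ≠ 1 := fun b hb => Nat.find_min hex hb
      have hBn : n₀ + 2 ≤ BB n₀ := by unfold BB; omega
      have hBpair : Nat.pair 1 (Nat.pair n₀ n₀) < BB n₀ := by unfold BB; omega
      have hgetD : ∀ L j, j < L → (prefixList (pairB x y) L).getD j 0 = Nat.pair (x j) (y j) := by
        intro L j hj
        rw [prefixList_getD hj]; rfl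
      have hnFst : ∀ L, n₀ < L → nFst (prefixList (pairB x y) L) = n₀ := by
        intro L hL
        unfold nFst
        rw [prefixList_length]
        apply lMin_eq_of hL
        · rw [hgetD L n₀ hL, Nat.unpair_pair]
          simpa using hyn₀
        · intro b hb
          rw [hgetD L b (by omega), Nat.unpair_pair]
          simpa using hymin b hb
      refine ⟨fun _ => cColor x n₀, ?_, ?_⟩
      · apply evalB_codeOf
        intro n
        refine ⟨BB n₀, ?_, ?_, ?_⟩
        · unfold D2
          rw [prefixList_length, hnFst (BB n₀) (by omega)]
          simp; omega
        · intro j hj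
          unfold D2
          rw [prefixList_length]
          rcases le_or_gt j n₀ with hcase | hcase
          · have : nFst (prefixList (pairB x y) j) = j := by
              unfold nFst
              rw [prefixList_length]
              apply lMin_default
              intro b hb
              rw [hgetD j b hb, Nat.unpair_pair]
              simpa using hymin b (by omega)
            rw [this]
            simp
          · rw [hnFst j hcase]
            have : j ≠ BB n₀ := by omega
            simp [this]
        · unfold G2
          rw [hnFst (BB n₀) (by omega)]
          apply cColor_congr
          intro j hj
          have hjL : j < BB n₀ := by omega
          rw [hgetD (BB n₀) j hjL, Nat.unpair_pair]
      · -- the output is a correct DML2 answer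
        have hcx : cColor x n₀ = i := hy3 n₀ hyn₀
        refine ⟨cColor x n₀, cColor_le_one x n₀, fun _ => rfl, ?_⟩
        rw [hcx]
        apply not_sig2_of_infinite hx
        · rw [← hcx]; exact cColor_le_one x n₀
        · apply Set.Infinite.mono _ hy2
          intro n hn
          exact hy3 n hn
  · -- RT12 ≤_W DML2
    refine ⟨codeOf D3 G3, codeOf D4 G4,
      codeOf_computable D3_primrec G3_primrec,
      codeOf_computable D4_primrec G4_primrec, ?_⟩
    intro x hx
    -- hx : ∀ n, x n ≤ 1
    set α : Baire := fun m =>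
      bif decide ((Nat.unpair (Nat.unpair m).2).1 ≤ (Nat.unpair (Nat.unpair m).2).2) &&
          decide (x (Nat.unpair (Nat.unpair m).2).2 = (Nat.unpair m).1)
      then 1 else 0 with hα
    have hαval : ∀ j a b, α (Nat.pair j (Nat.pair a b)) =
        bif decide (a ≤ b) && decide (x b = j) then 1 else 0 := by
      intro j a b
      rw [hα]
      simp [Nat.unpair_pair]
    have hαzero : ∀ j a b, α (Nat.pair j (Nat.pair a b)) = 0 ↔ ¬ (a ≤ b ∧ x b = j) := by
      intro j a b
      rw [hαval]
      rcases h1 : decide (a ≤ b) with _ | _ <;> rcases h2 : decide (x b = j) with _ | _ <;>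
        simp_all
    have hsig : ∀ j, Sig2 α j ↔ ∃ a, ∀ b, ¬ (a ≤ b ∧ x b = j) := by
      intro j
      constructor
      · rintro ⟨a, ha⟩
        exact ⟨a, fun b => (hαzero j a b).1 (ha b)⟩
      · rintro ⟨a, ha⟩
        exact ⟨a, fun b => (hαzero j a b).2 (ha b)⟩
    refine ⟨α, ?_, ?_, ?_⟩
    · -- evalB of the inner code
      apply evalB_codeOf
      intro m
      refine ⟨m + 1, ?_, ?_, ?_⟩
      · simp [D3, prefixList_length]
      · intro j hj
        simp only [D3, prefixList_length]
        simpa using Nat.ne_of_lt hj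
      · unfold G3
        have hble : (Nat.unpair (Nat.unpair m).2).2 < m + 1 := by
          have h1 := Nat.unpair_right_le m
          have h2 := Nat.unpair_right_le (Nat.unpair m).2
          omega
        rw [prefixList_getD hble, hα]
    · -- in the domain of DML2
      rintro ⟨h0, h1⟩
      rw [hsig] at h0 h1
      obtain ⟨a0, ha0⟩ := h0
      obtain ⟨a1, ha1⟩ := h1
      set b := max a0 a1 with hb
      have hx0 : x b ≠ 0 := fun hc => ha0 b ⟨le_max_left _ _, hc⟩
      have hx1 : x b ≠ 1 := fun hc => ha1 b ⟨le_max_right _ _, hc⟩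
      have := hx b
      omega
    · -- outer reduction
      intro y hy
      obtain ⟨j, hj1, hj2, hj3⟩ := hy
      refine ⟨fun n => bif decide (x n = j) then 1 else 0, ?_, ?_, ?_, ?_⟩
      · apply evalB_codeOf
        intro n
        refine ⟨n + 1, ?_, ?_, ?_⟩
        · simp [D4, prefixList_length]
        · intro k hk
          simp only [D4, prefixList_length]
          simpa using Nat.ne_of_lt hk
        · unfold G4
          have h1 : (prefixList (pairB x y) (n + 1)).getD n 0 = Nat.pair (x n) (y n) := by
            rw [prefixList_getD (by omega)]; rfl
          have h2 : (prefixList (pairB x y) (n + 1)).getD 0 0 = Nat.pair (x 0) (y 0) := by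
            rw [prefixList_getD (by omega)]; rfl
          rw [h1, h2, Nat.unpair_pair, Nat.unpair_pair, hj2 0]
      · -- output values ≤ 1
        intro n
        by_cases h : x n = j <;> simp [h]
      · -- the homogeneous set is infinite
        have hinfset : ∀ a, ∃ b, a ≤ b ∧ x b = j := by
          intro a
          by_contra hc
          push_neg at hc
          exact hj3 ((hsig j).2 ⟨a, fun b hb => (hc b hb.1) hb.2⟩)
        apply Set.infinite_of_not_bddAbove
        rintro ⟨ub, hub⟩
        obtain ⟨b, hb1, hb2⟩ := hinfset (ub + 1)
        have hmem : b ∈ {n | (fun n => bif decide (x n = j) then 1 else 0) n = 1} := by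
          simp [hb2]
        have := hub hmem
        omega
      · -- homogeneity
        refine ⟨j, fun n hn => ?_⟩
        by_cases h : x n = j
        · exact h
        · simp [h] at hn

end
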